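/- Let x be an infinite word over a finite alphabet A, let k ≥ 1, and let π : A^k → B be a higher k-block code into a finite alphabet B. If x is factor-balanced, then the infinite word π(x) is factor-balanced. -/
import Mathlib


open scoped Classical

section Core

variable {A : Type*} {B : Type*}

/-- `w` occurs at position `i` of the infinite word `x`. -/
def OccursAt (x : ℕ → A) (w : List A) (i : ℕ) : Prop :=
  w = (List.range w.length).map fun j => x (i + j)

/-- `w` is a factor of the infinite word `x`. -/
def IsFactor (x : ℕ → A) (w : List A) : Prop := ∃ i, OccursAt x w i

/-- The number of (possibly overlapping) occurrences of `w` in the finite word `u`,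
i.e. `|u|_w`. -/
noncomputable def countOccs (u w : List A) : ℕ :=
  ((Finset.range (u.length + 1)).filter fun i => w <+: u.drop i).card

/-- The finite word `w` is `C`-balanced in the infinite word `x`. -/
def BalancedIn (C : ℝ) (w : List A) (x : ℕ → A) : Prop :=
  ∀ u v : List A, IsFactor x u → IsFactor x v → u.length = v.length →
    |(countOccs u w : ℝ) - (countOccs v w : ℝ)| ≤ C

/-- Every finite word is `C_w`-balanced in `x` for some constant `C_w > 0`. -/
def FactorBalanced (x : ℕ → A) : Prop :=
  ∀ w : List A, ∃ C : ℝ, 0 < C ∧ BalancedIn C w x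

/-- There is a single constant `C > 0` such that every finite word is `C`-balanced in `x`. -/
def UniformlyFactorBalanced (x : ℕ → A) : Prop :=
  ∃ C : ℝ, 0 < C ∧ ∀ w : List A, BalancedIn C w x

/-- Every letter is `C`-balanced in `x`. -/
def LetterBalanced (C : ℝ) (x : ℕ → A) : Prop :=
  ∀ a : A, BalancedIn C [a] x

/-- `x` is `P`-power-free: no factor of `x` is a `P`-th power of a nonempty word. -/
def PowerFree (P : ℕ) (x : ℕ → A) : Prop :=
  ∀ v : List A, v ≠ [] → ¬ IsFactor x (List.flatten (List.replicate P v))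

/-- The length-`n` prefix of the infinite word `x`. -/
def wordPrefix (x : ℕ → A) (n : ℕ) : List A := (List.range n).map x

/-- The extension of a substitution to finite words. -/
def substWord (τ : A → List B) (w : List A) : List B := (w.map τ).flatten

/-- The word `w` has (prefix) frequency `μ` in `x`. -/
def HasFreq (x : ℕ → A) (w : List A) (μ : ℝ) : Prop :=
  Filter.Tendsto (fun n => (countOccs (wordPrefix x n) w : ℝ) / n)
    Filter.atTop (nhds μ)

/-- `τ` is `k`-decisive in `x` with witness map `r` (each `r a` of length `k ≥ 1`,
and `τ b` starts with `r a` whenever `ab` is a factor of `x`). -/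
def DecisiveWith (τ : A → List B) (x : ℕ → A) (r : A → List B) (k : ℕ) : Prop :=
  1 ≤ k ∧ (∀ a, (r a).length = k) ∧
    ∀ a b : A, IsFactor x [a, b] → r a <+: τ b

/-- `τ` is `k`-decisive in `x`. -/
def Decisive (τ : A → List B) (x : ℕ → A) (k : ℕ) : Prop :=
  ∃ r : A → List B, DecisiveWith τ x r k

/-- The image of the infinite word `x` under the substitution `τ`: when the images of
prefixes of `x` have unbounded length, `substInf τ x` is the infinite word `τ(x)`. -/
noncomputable def substInf [Nonempty B] (τ : A → List B) (x : ℕ → A) (j : ℕ) : B :=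
  if h : ∃ n, j < (substWord τ (wordPrefix x n)).length
  then (substWord τ (wordPrefix x (Nat.find h))).get ⟨j, Nat.find_spec h⟩
  else Classical.arbitrary B

/-- Iterates of a substitution: `substIter τ n a = τ^n(a)` as a finite word. -/
def substIter (τ : A → List A) : ℕ → A → List A
  | 0, a => [a]
  | n+1, a => substWord (substIter τ n) (τ a)

/-- `τ` is prolongable on the letter `a`. -/
def Prolongable (τ : A → List A) (a : A) : Prop :=
  (τ a).head? = some a ∧ (∀ b, τ b ≠ []) ∧
    Filter.Tendsto (fun n => (substIter τ n a).length) Filter.atTop Filter.atTop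

/-- The fixed point `τ^ω(a)` of a substitution prolongable on `a`:
the limit of the prefix chain `τ^n(a)`. -/
noncomputable def fixedPoint (τ : A → List A) (a : A) (j : ℕ) : A :=
  if h : ∃ n, j < (substIter τ n a).length
  then (substIter τ (Nat.find h) a).get ⟨j, Nat.find_spec h⟩
  else a

/-- The factor complexity of `x`: the number of distinct length-`n` factors. -/
noncomputable def complexity (x : ℕ → A) (n : ℕ) : ℕ :=
  Set.ncard {w : List A | w.length = n ∧ IsFactor x w}

/-- Every factor of `x` occurs infinitely often in `x`. -/
def Recurrent (x : ℕ → A) : Prop :=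
  ∀ w : List A, IsFactor x w → ∀ N : ℕ, ∃ i, N ≤ i ∧ OccursAt x w i

/-- For every factor `w` of `x` there is `k` such that `w` occurs in
every length-`k` factor of `x`. -/
def UniformlyRecurrent (x : ℕ → A) : Prop :=
  ∀ w : List A, IsFactor x w → ∃ k : ℕ, ∀ v : List A, IsFactor x v →
    v.length = k → 1 ≤ countOccs v w

end Core

section Aux

lemma prefix_drop_map_range {A : Type*} (z : ℕ → A) (i n j : ℕ) (w : List A) (hj : j ≤ n) :
    (w <+: ((List.range n).map fun t => z (i + t)).drop j) ↔
      (j + w.length ≤ n ∧ w = (List.range w.length).map fun t => z (i + j + t)) := by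
  rw [List.prefix_iff_eq_take]
  constructor
  · intro hw
    have h1 := congrArg List.length hw
    simp only [List.length_take, List.length_drop, List.length_map, List.length_range] at h1
    have hlen : j + w.length ≤ n := by omega
    refine ⟨hlen, ?_⟩
    rw [hw]
    apply List.ext_getElem
    · simp only [List.length_take, List.length_drop, List.length_map, List.length_range]; try omega
    · intro t ht1 ht2
      simp only [List.getElem_take, List.getElem_drop, List.getElem_map, List.getElem_range]
      congr 1; omega
  · rintro ⟨h1, h2⟩
    apply List.ext_getElem
    · simp only [List.length_take, List.length_drop, List.length_map, List.length_range]; try omega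
    · intro t ht1 ht2
      have hwt := List.getElem_of_eq h2 ht1
      simp only [List.getElem_map, List.getElem_range] at hwt
      rw [hwt]
      simp only [List.getElem_take, List.getElem_drop, List.getElem_map, List.getElem_range]
      congr 1; omega

lemma occ_count' {A : Type*} (z : ℕ → A) (i n : ℕ) (w : List A) :
    countOccs ((List.range n).map fun t => z (i + t)) w
      = ∑ j ∈ Finset.range (n + 1),
          if j + w.length ≤ n ∧ w = (List.range w.length).map (fun t => z (i + j + t))
          then 1 else 0 := by
  unfold countOccs
  rw [Finset.card_filter]
  simp only [List.length_map, List.length_range]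
  refine Finset.sum_congr rfl fun j hj => ?_
  rw [Finset.mem_range] at hj
  simp only [prefix_drop_map_range z i n j w (by omega)]

lemma ofFn_eq_map_range {A : Type*} {c : ℕ} (f : Fin c → A) (g : ℕ → A) :
    List.ofFn f = (List.range c).map g ↔ ∀ s : Fin c, f s = g s.1 := by
  have h : (List.range c).map g = List.ofFn (fun s : Fin c => g s.1) := by
    apply List.ext_getElem
    · simp
    · intro t ht1 ht2; simp
  rw [h, List.ofFn_inj, funext_iff]

lemma eq_map_range_iff {A : Type*} (w : List A) (g : ℕ → A) :
    w = (List.range w.length).map g ↔ ∀ t : Fin w.length, w[t.1] = g t.1 := by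
  constructor
  · intro he t
    have := List.getElem_of_eq he t.2
    simpa using this
  · intro he
    apply List.ext_getElem
    · simp
    · intro t ht1 ht2
      simpa using he ⟨t, ht1⟩

lemma key_count {A B : Type*} [Fintype A] (K : ℕ) (π : (Fin (K+1) → A) → B)
    (x : ℕ → A) (y : ℕ → B) (hy : ∀ m, y m = π fun r : Fin (K+1) => x (m + (r : ℕ)))
    (w : List B) (i n : ℕ) :
    countOccs ((List.range n).map fun t => y (i + t)) w
      = ∑ f : Fin (w.length + K) → A,
          if (∀ t : Fin w.length,
              w[t.1] = π fun r => f ⟨t.1 + r.1, Nat.add_lt_add_of_lt_of_le t.2 (Nat.lt_succ_iff.mp r.2)⟩)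
          then countOccs ((List.range (n + K)).map fun t => x (i + t)) (List.ofFn f)
          else 0 := by
  have step1 : ∀ f : Fin (w.length + K) → A,
      countOccs ((List.range (n + K)).map fun t => x (i + t)) (List.ofFn f)
        = ∑ j ∈ Finset.range (n + K + 1),
            if (j + w.length ≤ n ∧ ∀ s : Fin (w.length + K), f s = x (i + j + s.1))
            then 1 else 0 := by
    intro f
    rw [occ_count']
    refine Finset.sum_congr rfl fun j hj => ?_
    simp only [List.length_ofFn, ofFn_eq_map_range]
    exact if_congr (by constructor <;> rintro ⟨h1, h2⟩ <;> exact ⟨by omega, h2⟩) rfl rfl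
  have step2 :
      (∑ f : Fin (w.length + K) → A,
          if (∀ t : Fin w.length,
              w[t.1] = π fun r => f ⟨t.1 + r.1, Nat.add_lt_add_of_lt_of_le t.2 (Nat.lt_succ_iff.mp r.2)⟩)
          then countOccs ((List.range (n + K)).map fun t => x (i + t)) (List.ofFn f)
          else 0)
        = ∑ f : Fin (w.length + K) → A, ∑ j ∈ Finset.range (n + K + 1),
            if ((∀ t : Fin w.length,
                w[t.1] = π fun r => f ⟨t.1 + r.1, Nat.add_lt_add_of_lt_of_le t.2 (Nat.lt_succ_iff.mp r.2)⟩)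
              ∧ j + w.length ≤ n ∧ ∀ s : Fin (w.length + K), f s = x (i + j + s.1))
            then 1 else 0 := by
    refine Finset.sum_congr rfl fun f _ => ?_
    by_cases hQ : ∀ t : Fin w.length,
        w[t.1] = π fun r => f ⟨t.1 + r.1, Nat.add_lt_add_of_lt_of_le t.2 (Nat.lt_succ_iff.mp r.2)⟩
    · rw [if_pos hQ, step1 f]
      exact Finset.sum_congr rfl fun j _ => by simp [hQ]
    · rw [if_neg hQ]
      refine (Finset.sum_eq_zero fun j _ => ?_).symm
      rw [if_neg]
      rintro ⟨h1, -⟩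
      exact hQ h1
  rw [step2, Finset.sum_comm]
  have hinner : ∀ j : ℕ,
      (∑ f : Fin (w.length + K) → A,
          if ((∀ t : Fin w.length,
              w[t.1] = π fun r => f ⟨t.1 + r.1, Nat.add_lt_add_of_lt_of_le t.2 (Nat.lt_succ_iff.mp r.2)⟩)
            ∧ j + w.length ≤ n ∧ ∀ s : Fin (w.length + K), f s = x (i + j + s.1))
          then (1:ℕ) else 0)
        = if (j + w.length ≤ n ∧ w = (List.range w.length).map fun t => y (i + j + t))
          then 1 else 0 := by
    intro j
    have h1 : ∀ f : Fin (w.length + K) → A,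
        (if ((∀ t : Fin w.length,
            w[t.1] = π fun r => f ⟨t.1 + r.1, Nat.add_lt_add_of_lt_of_le t.2 (Nat.lt_succ_iff.mp r.2)⟩)
          ∧ j + w.length ≤ n ∧ ∀ s : Fin (w.length + K), f s = x (i + j + s.1))
        then (1:ℕ) else 0)
          = if f = (fun s : Fin (w.length + K) => x (i + j + s.1)) then
              (if ((∀ t : Fin w.length,
                  w[t.1] = π fun r : Fin (K+1) =>
                    x (i + j + (t.1 + r.1)))
                ∧ j + w.length ≤ n) then 1 else 0)
            else 0 := by
      intro f
      by_cases hf : f = fun s : Fin (w.length + K) => x (i + j + s.1)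
      · subst hf
        rw [if_pos rfl]
        refine if_congr ?_ rfl rfl
        constructor
        · rintro ⟨ha, hb, -⟩; exact ⟨fun t => ha t, hb⟩
        · rintro ⟨ha, hb⟩; exact ⟨fun t => ha t, hb, fun s => rfl⟩
      · rw [if_neg hf, if_neg]
        rintro ⟨-, -, h3⟩
        exact hf (funext fun s => h3 s)
    rw [Finset.sum_congr rfl fun f _ => h1 f, Finset.sum_ite_eq' Finset.univ]
    rw [if_pos (Finset.mem_univ _)]
    refine if_congr ?_ rfl rfl
    rw [eq_map_range_iff, and_comm]
    refine and_congr_right fun _ => forall_congr' fun t => ?_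
    have harg : (π fun r : Fin (K+1) => x (i + j + (t.1 + r.1))) = y (i + j + t.1) := by
      rw [hy]
      congr 1
      funext r
      congr 1
      simp [Nat.add_assoc]
    rw [harg]
  rw [Finset.sum_congr rfl fun j _ => hinner j]
  rw [occ_count']
  refine (Finset.sum_subset (Finset.range_subset_range.mpr (Nat.succ_le_succ (Nat.le_add_right n K))) fun j hj hj' => ?_)
  rw [Finset.mem_range] at hj'
  rw [if_neg]
  rintro ⟨h1, -⟩
  exact hj' (Nat.lt_succ_of_le (le_trans (Nat.le_add_right j w.length) h1))

end Aux


/-- Proposition: the image of a factor-balanced word under a higher `k`-block code is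
factor-balanced. -/
theorem stmt7 {A B : Type*} [Fintype A] [Fintype B] (k : ℕ) (hk : 1 ≤ k)
    (π : (Fin k → A) → B) (x : ℕ → A) (h : FactorBalanced x) :
    FactorBalanced (fun n => π fun j => x (n + (j : ℕ))) := by
  obtain ⟨K, rfl⟩ : ∃ K, k = K + 1 := ⟨k - 1, by omega⟩
  intro w
  set y : ℕ → B := fun n => π fun j => x (n + (j : ℕ)) with hy
  choose C hCpos hCbal using h
  have h0 : (0:ℝ) ≤ ∑ f : Fin (w.length + K) → A, C (List.ofFn f) :=
    Finset.sum_nonneg fun f _ => (hCpos _).le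
  refine ⟨1 + ∑ f : Fin (w.length + K) → A, C (List.ofFn f), by linarith, ?_⟩
  intro u v hu hv hlen
  obtain ⟨i, hi⟩ := hu
  obtain ⟨i', hi'⟩ := hv
  unfold OccursAt at hi hi'
  have cu := key_count K π x y (fun m => rfl) w i u.length
  have cv := key_count K π x y (fun m => rfl) w i' v.length
  rw [← hi] at cu
  rw [← hi'] at cv
  rw [hlen] at cu
  have expand : (countOccs u w : ℝ) - (countOccs v w : ℝ)
      = ∑ f : Fin (w.length + K) → A,
          ((if (∀ t : Fin w.length,
              w[t.1] = π fun r => f ⟨t.1 + r.1, Nat.add_lt_add_of_lt_of_le t.2 (Nat.lt_succ_iff.mp r.2)⟩)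
            then (countOccs ((List.range (v.length + K)).map fun t => x (i + t)) (List.ofFn f) : ℝ)
            else 0)
          - (if (∀ t : Fin w.length,
              w[t.1] = π fun r => f ⟨t.1 + r.1, Nat.add_lt_add_of_lt_of_le t.2 (Nat.lt_succ_iff.mp r.2)⟩)
            then (countOccs ((List.range (v.length + K)).map fun t => x (i' + t)) (List.ofFn f) : ℝ)
            else 0)) := by
    rw [cu, cv, Finset.sum_sub_distrib]
    push_cast [apply_ite (Nat.cast : ℕ → ℝ)]
    ring
  have hfactU : IsFactor x ((List.range (v.length + K)).map fun t => x (i + t)) := by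
    refine ⟨i, ?_⟩
    unfold OccursAt
    simp
  have hfactV : IsFactor x ((List.range (v.length + K)).map fun t => x (i' + t)) := by
    refine ⟨i', ?_⟩
    unfold OccursAt
    simp
  calc |(countOccs u w : ℝ) - (countOccs v w : ℝ)|
      ≤ ∑ f : Fin (w.length + K) → A,
          |(if (∀ t : Fin w.length,
              w[t.1] = π fun r => f ⟨t.1 + r.1, Nat.add_lt_add_of_lt_of_le t.2 (Nat.lt_succ_iff.mp r.2)⟩)
            then (countOccs ((List.range (v.length + K)).map fun t => x (i + t)) (List.ofFn f) : ℝ)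
            else 0)
          - (if (∀ t : Fin w.length,
              w[t.1] = π fun r => f ⟨t.1 + r.1, Nat.add_lt_add_of_lt_of_le t.2 (Nat.lt_succ_iff.mp r.2)⟩)
            then (countOccs ((List.range (v.length + K)).map fun t => x (i' + t)) (List.ofFn f) : ℝ)
            else 0)| := by
        rw [expand]
        exact Finset.abs_sum_le_sum_abs _ _
    _ ≤ ∑ f : Fin (w.length + K) → A, C (List.ofFn f) := by
        refine Finset.sum_le_sum fun f _ => ?_
        by_cases hQ : ∀ t : Fin w.length,
            w[t.1] = π fun r => f ⟨t.1 + r.1, Nat.add_lt_add_of_lt_of_le t.2 (Nat.lt_succ_iff.mp r.2)⟩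
        · rw [if_pos hQ, if_pos hQ]
          exact hCbal (List.ofFn f) _ _ hfactU hfactV (by simp)
        · rw [if_neg hQ, if_neg hQ]
          simpa using (hCpos (List.ofFn f)).le
    _ ≤ 1 + ∑ f : Fin (w.length + K) → A, C (List.ofFn f) := by linarith
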